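/- Let G be a hyperbolic group, let g ∈ G be an element of infinite order, and suppose x g^k x⁻¹ = g^l holds in G for some x ∈ G and integers k, l with l ≠ 0. Then k = l or k = −l. -/

import Mathlib

/-- The Cayley graph of `G` with respect to the generators `f : X → G`. -/
def cayley {G : Type*} [Group G] {X : Type*} (f : X → G) : SimpleGraph G where
  Adj g h := g ≠ h ∧ ∃ x : X, g * f x = h ∨ h * f x = g
  symm := ⟨by rintro g h ⟨hne, x, hx⟩; exact ⟨hne.symm, x, hx.symm⟩⟩
  loopless := ⟨by rintro g ⟨hne, -⟩; exact hne rfl⟩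

/-- All geodesic triangles of the graph `Γ` are `δ`-slim: every vertex of any side is
within distance `δ` of the union of the other two sides. -/
def SlimTriangles {V : Type*} (Γ : SimpleGraph V) (δ : ℕ) : Prop :=
  ∀ (a b c : V) (p : Γ.Walk a b) (q : Γ.Walk b c) (r : Γ.Walk a c),
    p.length = Γ.dist a b → q.length = Γ.dist b c → r.length = Γ.dist a c →
    ∀ u ∈ p.support, ∃ v, (v ∈ q.support ∨ v ∈ r.support) ∧ Γ.dist u v ≤ δ

/-- `G` is a (word-)hyperbolic group: it has a finite generating set whose Cayley graph
has `δ`-slim geodesic triangles for some `δ`. -/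
def IsHyperbolicGroup (G : Type*) [Group G] : Prop :=
  ∃ (S : Finset G) (δ : ℕ), Subgroup.closure (S : Set G) = ⊤ ∧
    SlimTriangles (cayley (fun s : S => (s : G))) δ

namespace HypAux

open SimpleGraph

variable {G : Type*} [Group G]

abbrev cay (S : Finset G) : SimpleGraph G := cayley (fun s : S => (s : G))

variable (S : Finset G)

lemma adj_smul (a : G) {u v : G} (h : (cay S).Adj u v) : (cay S).Adj (a * u) (a * v) := by
  obtain ⟨hne, s, hs | hs⟩ := h
  · exact ⟨by simpa using hne, s, Or.inl (by rw [mul_assoc, hs])⟩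
  · exact ⟨by simpa using hne, s, Or.inr (by rw [mul_assoc, hs])⟩

def mulHom (a : G) : cay S →g cay S where
  toFun := fun u => a * u
  map_rel' := adj_smul S a

lemma reach_smul (a : G) {u v : G} (h : (cay S).Reachable u v) :
    (cay S).Reachable (a * u) (a * v) := by
  obtain ⟨p⟩ := h
  exact ⟨p.map (mulHom S a)⟩

lemma connected_of_closure (hclos : Subgroup.closure (S : Set G) = ⊤) :
    (cay S).Connected := by
  have key : ∀ g : G, (cay S).Reachable 1 g := by
    intro g
    let Sub : Subgroup G :=
      { carrier := {g : G | (cay S).Reachable 1 g}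
        one_mem' := Reachable.refl 1
        mul_mem' := by
          intro a b ha hb
          have h2 : (cay S).Reachable a (a * b) := by
            simpa using reach_smul S a hb
          exact ha.trans h2
        inv_mem' := by
          intro a ha
          have h2 : (cay S).Reachable a⁻¹ 1 := by
            simpa using reach_smul S a⁻¹ ha
          exact h2.symm }
    have hS : (S : Set G) ⊆ Sub := by
      intro s hs
      by_cases h1 : s = 1
      · subst h1; exact Reachable.refl 1
      · exact SimpleGraph.Adj.reachable ⟨fun h => h1 h.symm, ⟨s, hs⟩, Or.inl (one_mul s)⟩
    have : Subgroup.closure (S : Set G) ≤ Sub := (Subgroup.closure_le Sub).mpr hS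
    rw [hclos] at this
    exact this (Subgroup.mem_top g)
  exact Connected.mk (fun u v => (key u).symm.trans (key v))

lemma getVert_map (a : G) {u v : G} (p : (cay S).Walk u v) (i : ℕ) :
    (p.map (mulHom S a)).getVert i = a * p.getVert i := by
  induction p generalizing i with
  | nil =>
    rw [Walk.map_nil, Walk.getVert_of_length_le _ (by simp),
      Walk.getVert_of_length_le _ (by simp)]
    rfl
  | cons h q ih =>
    cases i with
    | zero => rfl
    | succ n => simpa using ih n

lemma dist_smul (hconn : (cay S).Connected) (a : G) (u v : G) :
    (cay S).dist (a * u) (a * v) = (cay S).dist u v := by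
  have key : ∀ (b : G) (w z : G), (cay S).dist (b * w) (b * z) ≤ (cay S).dist w z := by
    intro b w z
    obtain ⟨p, hp⟩ := ((hconn w z)).exists_walk_length_eq_dist
    calc (cay S).dist (b * w) (b * z) ≤ (p.map (mulHom S b)).length := dist_le _
      _ = p.length := by simp
      _ = (cay S).dist w z := hp
  refine le_antisymm (key a u v) ?_
  have := key a⁻¹ (a * u) (a * v)
  simpa using this

noncomputable def nrm (g : G) : ℕ := (cay S).dist 1 g

lemma dist_eq_nrm (hconn : (cay S).Connected) (u v : G) :
    (cay S).dist u v = nrm S (u⁻¹ * v) := by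
  have := dist_smul S hconn u⁻¹ u v
  simp only [inv_mul_cancel] at this
  rw [nrm, this]

lemma nrm_one : nrm S (1 : G) = 0 := by simp [nrm]

lemma nrm_mul_le (hconn : (cay S).Connected) (a b : G) :
    nrm S (a * b) ≤ nrm S a + nrm S b := by
  have h1 : (cay S).dist 1 (a * b) ≤ (cay S).dist 1 a + (cay S).dist a (a * b) :=
    hconn.dist_triangle
  have h2 : (cay S).dist a (a * b) = nrm S b := by
    rw [dist_eq_nrm S hconn]; simp
  simpa [nrm, h2] using h1

lemma nrm_inv (hconn : (cay S).Connected) (a : G) : nrm S a⁻¹ = nrm S a := by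
  have := dist_smul S hconn a 1 a⁻¹
  simp only [mul_one, mul_inv_cancel] at this
  unfold nrm
  rw [← this, SimpleGraph.dist_comm]

lemma nrm_pow_le (hconn : (cay S).Connected) (a : G) (n : ℕ) :
    nrm S (a ^ n) ≤ n * nrm S a := by
  induction n with
  | zero => simp [nrm]
  | succ n ih =>
    calc nrm S (a ^ (n + 1)) = nrm S (a ^ n * a) := by rw [pow_succ]
      _ ≤ nrm S (a ^ n) + nrm S a := nrm_mul_le S hconn _ _
      _ ≤ n * nrm S a + nrm S a := by omega
      _ = (n + 1) * nrm S a := by ring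

lemma nrm_conj_le (hconn : (cay S).Connected) (a b : G) :
    nrm S (b * a * b⁻¹) ≤ nrm S a + 2 * nrm S b := by
  calc nrm S (b * a * b⁻¹) ≤ nrm S (b * a) + nrm S b⁻¹ := nrm_mul_le S hconn _ _
    _ ≤ nrm S b + nrm S a + nrm S b⁻¹ := by
        have := nrm_mul_le S hconn b a; omega
    _ = nrm S a + 2 * nrm S b := by rw [nrm_inv S hconn]; ring

lemma nrm_eq_zero (hconn : (cay S).Connected) {a : G} (h : nrm S a = 0) : a = 1 :=
  ((hconn.dist_eq_zero_iff).mp h).symm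

lemma dist_getVert_le (hconn : (cay S).Connected) {u v : G} (p : (cay S).Walk u v)
    (i j : ℕ) (hij : i ≤ j) :
    (cay S).dist (p.getVert i) (p.getVert j) ≤ j - i := by
  obtain ⟨n, rfl⟩ : ∃ n, j = i + n := ⟨j - i, by omega⟩
  induction n with
  | zero => simp
  | succ n ih =>
    have step : (cay S).dist (p.getVert (i + n)) (p.getVert (i + n + 1)) ≤ 1 := by
      by_cases h : i + n < p.length
      · have hadj := p.adj_getVert_succ h
        exact le_trans (dist_le hadj.toWalk) (by simp)
      · rw [p.getVert_of_length_le (by omega : p.length ≤ i + n),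
          p.getVert_of_length_le (by omega : p.length ≤ i + n + 1)]
        rw [SimpleGraph.dist_self]
        omega
    have hx : i + (n+1) = i + n + 1 := by omega
    rw [hx]
    have tri := hconn.dist_triangle (u := p.getVert i) (v := p.getVert (i+n))
      (w := p.getVert (i + n + 1))
    omega


lemma dist_getVert_geodesic (hconn : (cay S).Connected) {u v : G} (p : (cay S).Walk u v)
    (hp : p.length = (cay S).dist u v) {i j : ℕ} (hij : i ≤ j) (hj : j ≤ p.length) :
    (cay S).dist (p.getVert i) (p.getVert j) = j - i := by
  have hle := dist_getVert_le S hconn p i j hij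
  have h1 : (cay S).dist u (p.getVert i) ≤ i := by
    have := dist_getVert_le S hconn p 0 i (by omega)
    simpa using this
  have h2 : (cay S).dist (p.getVert j) v ≤ p.length - j := by
    have := dist_getVert_le S hconn p j p.length hj
    simpa using this
  have t1 := hconn.dist_triangle (u := u) (v := p.getVert i) (w := p.getVert j)
  have t2 := hconn.dist_triangle (u := u) (v := p.getVert j) (w := v)
  omega

lemma ball_finite (hconn : (cay S).Connected) (R : ℕ) : {v : G | nrm S v ≤ R}.Finite := by
  induction R with
  | zero =>
    apply Set.Finite.subset (Set.finite_singleton (1 : G))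
    intro v hv
    simp only [Set.mem_setOf_eq, Nat.le_zero] at hv
    simp [nrm_eq_zero S hconn hv]
  | succ R ih =>
    have hsub : {v : G | nrm S v ≤ R + 1} ⊆
        {v : G | nrm S v ≤ R} ∪
          ⋃ u ∈ {v : G | nrm S v ≤ R},
            ((fun s : G => u * s) '' (S : Set G) ∪ (fun s : G => u * s⁻¹) '' (S : Set G)) := by
      intro w hw
      simp only [Set.mem_setOf_eq] at hw
      by_cases hR : nrm S w ≤ R
      · exact Or.inl hR
      have hweq : nrm S w = R + 1 := by omega
      right
      obtain ⟨p, hp⟩ := (hconn 1 w).exists_walk_length_eq_dist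
      have hlen : p.length = R + 1 := by rw [hp]; exact hweq
      have hu : (cay S).dist 1 (p.getVert R) = R := by
        have := dist_getVert_geodesic S hconn p hp (i := 0) (j := R) (by omega) (by omega)
        simpa using this
      have hadj : (cay S).Adj (p.getVert R) w := by
        have := p.adj_getVert_succ (by omega : R < p.length)
        have hl : p.getVert (R + 1) = w := by
          rw [← hlen]; exact p.getVert_length
        rwa [hl] at this
      refine Set.mem_biUnion (show p.getVert R ∈ {v : G | nrm S v ≤ R} from by
        simp [nrm, hu]) ?_
      obtain ⟨-, s, hs | hs⟩ := hadj
      · exact Or.inl ⟨(s : G), s.2, hs⟩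
      · exact Or.inr ⟨(s : G), s.2, by rw [← hs]; group⟩
    refine Set.Finite.subset (Set.Finite.union ih (Set.Finite.biUnion ih ?_)) hsub
    intro u _
    exact Set.Finite.union (Set.Finite.image _ S.finite_toSet) (Set.Finite.image _ S.finite_toSet)

lemma nrm_pow_unbounded (hconn : (cay S).Connected) (g : G) (hg : ¬ IsOfFinOrder g) (R : ℕ) :
    ∃ n : ℕ, 1 ≤ n ∧ R < nrm S (g ^ n) := by
  by_contra hcon
  push_neg at hcon
  have hmap : Set.MapsTo (fun n : ℕ => g ^ (n + 1)) Set.univ {v : G | nrm S v ≤ R} := by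
    intro n _
    exact hcon (n + 1) (by omega)
  obtain ⟨m, -, n, -, hmn, heq⟩ :=
    Set.infinite_univ.exists_ne_map_eq_of_mapsTo hmap (ball_finite S hconn R)
  wlog hlt : m < n generalizing m n
  · exact this n m hmn.symm heq.symm (by omega)
  apply hg
  refine isOfFinOrder_iff_pow_eq_one.mpr ⟨n - m, by omega, ?_⟩
  have : g ^ (n + 1) = g ^ (m + 1) * g ^ (n - m) := by
    rw [← pow_add]
    congr 1
    omega
  have heq' : g ^ (m + 1) = g ^ (n + 1) := heq
  rw [← heq', left_eq_mul] at this
  exact this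

section Chunk3

variable {G : Type*} [Group G] (S : Finset G) (δ : ℕ)

open SimpleGraph

lemma fellow_travel (hconn : (cay S).Connected) (hslim : SlimTriangles (cay S) δ)
    {a b c d : G} (p : (cay S).Walk a b) (q : (cay S).Walk c d)
    (hp : p.length = (cay S).dist a b) (hq : q.length = (cay S).dist c d)
    (hlen : q.length = p.length) (A : ℕ)
    (hac : (cay S).dist a c ≤ A) (hbd : (cay S).dist b d ≤ A)
    (i : ℕ) (hi : i ≤ p.length) :
    (cay S).dist (p.getVert i) (q.getVert i) ≤ 3 * A + 4 * δ := by
  obtain ⟨e, he⟩ := (hconn b d).exists_walk_length_eq_dist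
  obtain ⟨r, hr⟩ := (hconn a d).exists_walk_length_eq_dist
  obtain ⟨f, hf⟩ := (hconn a c).exists_walk_length_eq_dist
  have hu : p.getVert i ∈ p.support :=
    Walk.mem_support_iff_exists_getVert.mpr ⟨i, rfl, hi⟩
  obtain ⟨v, hv, huv⟩ := hslim a b d p e r hp he hr _ hu
  -- distance facts
  have hau : (cay S).dist a (p.getVert i) = i := by
    have := dist_getVert_geodesic S hconn p hp (i := 0) (j := i) (by omega) hi
    simpa using this
  have hub : (cay S).dist (p.getVert i) b = p.length - i := by
    have := dist_getVert_geodesic S hconn p hp (i := i) (j := p.length) hi le_rfl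
    simpa using this
  have hcqi : (cay S).dist c (q.getVert i) ≤ i := by
    have := dist_getVert_le S hconn q 0 i (by omega)
    simpa using this
  have hqid : (cay S).dist (q.getVert i) d ≤ p.length - i := by
    have := dist_getVert_le S hconn q i q.length (by omega)
    rw [Walk.getVert_length] at this
    omega
  rcases hv with hv | hv
  · -- v on the short side [b,d]
    obtain ⟨j, hgv, hjle⟩ := Walk.mem_support_iff_exists_getVert.mp hv
    have hbv : (cay S).dist b v ≤ A := by
      rw [← hgv]
      have := dist_getVert_le S hconn e 0 j (by omega)
      simp only [Walk.getVert_zero] at this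
      omega
    -- i is close to L
    have hclose : p.length - i ≤ δ + A := by
      have t := hconn.dist_triangle (u := p.getVert i) (v := v) (w := b)
      have : (cay S).dist v b = (cay S).dist b v := SimpleGraph.dist_comm ..
      omega
    have t1 := hconn.dist_triangle (u := p.getVert i) (v := v) (w := q.getVert i)
    have t2 := hconn.dist_triangle (u := v) (v := b) (w := q.getVert i)
    have t3 := hconn.dist_triangle (u := b) (v := d) (w := q.getVert i)
    have hdq : (cay S).dist d (q.getVert i) ≤ p.length - i := by
      rw [SimpleGraph.dist_comm]; exact hqid
    have hvb : (cay S).dist v b ≤ A := by rw [SimpleGraph.dist_comm]; exact hbv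
    omega
  · -- v on the diagonal r : a → d
    have hq' : q.reverse.length = (cay S).dist d c := by
      rw [Walk.length_reverse, SimpleGraph.dist_comm]; exact hq
    obtain ⟨w, hw, hvw⟩ := hslim a d c r q.reverse f hr hq' hf _ hv
    rcases hw with hw | hw
    · -- w on q
      have hwq : w ∈ q.support := by
        rw [Walk.support_reverse] at hw
        exact List.mem_reverse.mp hw
      obtain ⟨j, hgw, hjle⟩ := Walk.mem_support_iff_exists_getVert.mp hwq
      have hcw : (cay S).dist c w = j := by
        rw [← hgw]
        have := dist_getVert_geodesic S hconn q hq (i := 0) (j := j) (by omega) hjle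
        simpa using this
      have huw : (cay S).dist (p.getVert i) w ≤ 2 * δ := by
        have t := hconn.dist_triangle (u := p.getVert i) (v := v) (w := w)
        omega
      -- bound |j - i|
      have hj1 : i ≤ A + j + 2 * δ := by
        have t1 := hconn.dist_triangle (u := a) (v := c) (w := p.getVert i)
        have t2 := hconn.dist_triangle (u := c) (v := w) (w := p.getVert i)
        have : (cay S).dist w (p.getVert i) = (cay S).dist (p.getVert i) w :=
          SimpleGraph.dist_comm ..
        omega
      have hj2 : j ≤ A + i + 2 * δ := by
        have t1 := hconn.dist_triangle (u := c) (v := a) (w := w)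
        have t2 := hconn.dist_triangle (u := a) (v := p.getVert i) (w := w)
        have hca : (cay S).dist c a = (cay S).dist a c := SimpleGraph.dist_comm ..
        omega
      have hwqi : (cay S).dist w (q.getVert i) ≤ A + 2 * δ := by
        rw [← hgw]
        rcases le_total j i with hij | hij
        · have := dist_getVert_le S hconn q j i hij
          omega
        · have := dist_getVert_le S hconn q i j hij
          have hcm : (cay S).dist (q.getVert j) (q.getVert i)
              = (cay S).dist (q.getVert i) (q.getVert j) := SimpleGraph.dist_comm ..
          omega
      have t := hconn.dist_triangle (u := p.getVert i) (v := w) (w := q.getVert i)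
      omega
    · -- w on the short side [a,c]
      obtain ⟨j, hgw, hjle⟩ := Walk.mem_support_iff_exists_getVert.mp hw
      have haw : (cay S).dist a w ≤ A := by
        rw [← hgw]
        have := dist_getVert_le S hconn f 0 j (by omega)
        simp only [Walk.getVert_zero] at this
        omega
      have hua : (cay S).dist (p.getVert i) a ≤ 2 * δ + A := by
        have t1 := hconn.dist_triangle (u := p.getVert i) (v := v) (w := w)
        have t2 := hconn.dist_triangle (u := p.getVert i) (v := w) (w := a)
        have : (cay S).dist w a = (cay S).dist a w := SimpleGraph.dist_comm ..
        omega
      have hi' : i ≤ 2 * δ + A := by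
        have : (cay S).dist a (p.getVert i) = (cay S).dist (p.getVert i) a :=
          SimpleGraph.dist_comm ..
        omega
      have t1 := hconn.dist_triangle (u := p.getVert i) (v := a) (w := q.getVert i)
      have t2 := hconn.dist_triangle (u := a) (v := c) (w := q.getVert i)
      omega

end Chunk3

section Chunk4

variable {G : Type*} [Group G] (S : Finset G) (δ : ℕ)

open SimpleGraph

/-- Displacement bound along a geodesic between two points commuting with `g`. -/
lemma disp_along (hconn : (cay S).Connected) (hslim : SlimTriangles (cay S) δ) (g : G)
    {z1 z2 : G} (h1 : z1 * g = g * z1) (h2 : z2 * g = g * z2)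
    (p : (cay S).Walk z1 z2) (hp : p.length = (cay S).dist z1 z2)
    (i : ℕ) (hi : i ≤ p.length) :
    (cay S).dist (p.getVert i) (g * p.getVert i) ≤ 3 * nrm S g + 4 * δ := by
  have hq : (p.map (mulHom S g)).length = (cay S).dist (g * z1) (g * z2) := by
    rw [dist_smul S hconn, Walk.length_map]
    exact hp
  have hlen : (p.map (mulHom S g)).length = p.length := by simp
  have hac : (cay S).dist z1 (g * z1) ≤ nrm S g := by
    rw [dist_eq_nrm S hconn]
    rw [show z1⁻¹ * (g * z1) = z1⁻¹ * (z1 * g) from by rw [h1]]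
    simp
  have hbd : (cay S).dist z2 (g * z2) ≤ nrm S g := by
    rw [dist_eq_nrm S hconn]
    rw [show z2⁻¹ * (g * z2) = z2⁻¹ * (z2 * g) from by rw [h2]]
    simp
  have := fellow_travel S δ hconn hslim p (p.map (mulHom S g)) hp hq hlen
    (nrm S g) hac hbd i hi
  rwa [getVert_map] at this

open scoped Classical in
/-- Representative conjugating elements: if `c` is a conjugate of `g`, a chosen witness. -/
noncomputable def conjRep (g c : G) : G :=
  if h : ∃ x : G, x⁻¹ * g * x = c then h.choose else 1

lemma conjRep_spec (g c : G) (h : ∃ x : G, x⁻¹ * g * x = c) :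
    (conjRep g c)⁻¹ * g * conjRep g c = c := by
  classical
  rw [conjRep]
  rw [dif_pos h]
  exact h.choose_spec

/-- The quasiconvexity constant for the centralizer of `g`. -/
noncomputable def Cg (hconn : (cay S).Connected) (g : G) : ℕ :=
  (ball_finite S hconn (3 * nrm S g + 4 * δ)).toFinset.sup (fun c => nrm S (conjRep g c))

/-- Decomposition of points on geodesics between centralizer points. -/
lemma qc_decomp (hconn : (cay S).Connected) (hslim : SlimTriangles (cay S) δ) (g : G)
    {z1 z2 : G} (h1 : z1 * g = g * z1) (h2 : z2 * g = g * z2)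
    (p : (cay S).Walk z1 z2) (hp : p.length = (cay S).dist z1 z2)
    (i : ℕ) (hi : i ≤ p.length) :
    ∃ z b : G, p.getVert i = z * b ∧ z * g = g * z ∧ nrm S b ≤ Cg S δ hconn g := by
  set u := p.getVert i with hu
  set c := u⁻¹ * g * u with hc
  have hnc : nrm S c ≤ 3 * nrm S g + 4 * δ := by
    have hdisp := disp_along S δ hconn hslim g h1 h2 p hp i hi
    have : nrm S c = (cay S).dist u (g * u) := by
      rw [dist_eq_nrm S hconn, hc]
      congr 1
      group
    rw [this]
    exact hdisp
  have hex : ∃ x : G, x⁻¹ * g * x = c := ⟨u, rfl⟩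
  set x := conjRep g c with hx
  have hxc : x⁻¹ * g * x = c := conjRep_spec g c hex
  have hmem : c ∈ (ball_finite S hconn (3 * nrm S g + 4 * δ)).toFinset := by
    rw [Set.Finite.mem_toFinset]
    exact hnc
  have hnx : nrm S x ≤ Cg S δ hconn g :=
    Finset.le_sup (f := fun c => nrm S (conjRep g c)) hmem
  refine ⟨u * x⁻¹, x, by group, ?_, hnx⟩
  -- (u x⁻¹) g = g (u x⁻¹)  ⟺  u x⁻¹ g x u⁻¹ = g
  have e1 : g = u * c * u⁻¹ := by rw [hc]; group
  have e2 : g = x * c * x⁻¹ := by rw [← hxc]; group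
  calc u * x⁻¹ * g = u * x⁻¹ * (x * c * x⁻¹) := by rw [← e2]
    _ = u * c * x⁻¹ := by group
    _ = (u * c * u⁻¹) * (u * x⁻¹) := by group
    _ = g * (u * x⁻¹) := by rw [← e1]

/-- Key lower bound: conjugating a power of `g` by a prefix of a geodesic from `1` to it
cannot shorten it by more than `2 * Cg`. -/
lemma prefix_conj_bound (hconn : (cay S).Connected) (hslim : SlimTriangles (cay S) δ)
    (g : G) (m : ℕ)
    (p : (cay S).Walk 1 (g ^ m)) (hp : p.length = (cay S).dist 1 (g ^ m))
    (i : ℕ) (hi : i ≤ p.length) :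
    nrm S (g ^ m) ≤ nrm S ((p.getVert i)⁻¹ * g ^ m * p.getVert i) + 2 * Cg S δ hconn g := by
  obtain ⟨z, b, hzb, hzg, hnb⟩ := qc_decomp S δ hconn hslim g
    (by group) ((Commute.refl g).pow_left m).eq p hp i hi
  have hzh : z * g ^ m = g ^ m * z := (Commute.pow_right (hzg : Commute z g) m).eq
  have key : (p.getVert i)⁻¹ * g ^ m * p.getVert i = b⁻¹ * g ^ m * b := by
    rw [hzb]
    calc (z * b)⁻¹ * g ^ m * (z * b) = b⁻¹ * (z⁻¹ * (g ^ m * z)) * b := by group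
      _ = b⁻¹ * (z⁻¹ * (z * g ^ m)) * b := by rw [← hzh]
      _ = b⁻¹ * g ^ m * b := by group
  rw [key]
  have expand : g ^ m = b * (b⁻¹ * g ^ m * b) * b⁻¹ := by group
  calc nrm S (g ^ m) = nrm S (b * (b⁻¹ * g ^ m * b) * b⁻¹) := by rw [← expand]
    _ ≤ nrm S (b⁻¹ * g ^ m * b) + 2 * nrm S b := nrm_conj_le S hconn _ _
    _ ≤ nrm S (b⁻¹ * g ^ m * b) + 2 * Cg S δ hconn g := by omega

end Chunk4

section Chunk5

variable {G : Type*} [Group G] (S : Finset G) (δ : ℕ)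

open SimpleGraph

/-- Doubled Gromov product of `a, b` viewed from `w`. -/
noncomputable def gp2 (w a b : G) : ℕ :=
  (cay S).dist w a + (cay S).dist w b - (cay S).dist a b

lemma gp2_add (hconn : (cay S).Connected) (w a b : G) :
    gp2 S w a b + (cay S).dist a b = (cay S).dist w a + (cay S).dist w b := by
  have t := hconn.dist_triangle (u := a) (v := w) (w := b)
  have c1 : (cay S).dist a w = (cay S).dist w a := SimpleGraph.dist_comm ..
  rw [gp2]
  omega

lemma gp2_le_two_dist (hconn : (cay S).Connected) {x y : G} (p : (cay S).Walk x y)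
    (hp : p.length = (cay S).dist x y) (w : G) {i : ℕ} (hi : i ≤ p.length) :
    gp2 S w x y ≤ 2 * (cay S).dist w (p.getVert i) := by
  have h1 : (cay S).dist x (p.getVert i) ≤ i := by
    have := dist_getVert_le S hconn p 0 i (by omega)
    simpa using this
  have h2 : (cay S).dist (p.getVert i) y ≤ p.length - i := by
    have := dist_getVert_le S hconn p i p.length hi
    rwa [Walk.getVert_length] at this
  have t1 := hconn.dist_triangle (u := w) (v := p.getVert i) (w := x)
  have t2 := hconn.dist_triangle (u := w) (v := p.getVert i) (w := y)
  have c1 : (cay S).dist (p.getVert i) x = (cay S).dist x (p.getVert i) :=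
    SimpleGraph.dist_comm ..
  have hadd := gp2_add S hconn w x y
  omega

/-- The four-point (hyperbolicity) inequality for Gromov products. -/
lemma four_point (hconn : (cay S).Connected) (hslim : SlimTriangles (cay S) δ)
    (w x y z : G) :
    min (gp2 S w x y) (gp2 S w z y) ≤ gp2 S w x z + 8 * δ + 2 := by
  obtain ⟨r, hr⟩ := (hconn x z).exists_walk_length_eq_dist
  -- the balance point on [x, z]
  set A : ℕ := (cay S).dist x z + (cay S).dist x w - (cay S).dist z w with hA
  have hAt : A ≤ 2 * (cay S).dist x z := by
    have t := hconn.dist_triangle (u := x) (v := z) (w := w)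
    omega
  set t : ℕ := (A + 1) / 2 with ht
  have h2t : A ≤ 2 * t ∧ 2 * t ≤ A + 1 := by omega
  have htle : t ≤ r.length := by rw [hr]; omega
  set u := r.getVert t with hu
  have hxu : (cay S).dist x u = t :=
    by simpa using dist_getVert_geodesic S hconn r hr (i := 0) (j := t) (by omega) htle
  have hzu : (cay S).dist u z = r.length - t := by
    have := dist_getVert_geodesic S hconn r hr (i := t) (j := r.length) htle le_rfl
    rwa [Walk.getVert_length] at this
  have humem : u ∈ r.support := Walk.mem_support_iff_exists_getVert.mpr ⟨t, rfl, htle⟩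
  -- Step B : 2 * d(w, u) ≤ gp2 w x z + 4δ + 1
  have stepB : 2 * (cay S).dist w u ≤ gp2 S w x z + 4 * δ + 1 := by
    obtain ⟨q1, hq1⟩ := (hconn z w).exists_walk_length_eq_dist
    obtain ⟨r1, hr1⟩ := (hconn x w).exists_walk_length_eq_dist
    obtain ⟨v, hv, huv⟩ := hslim x z w r q1 r1 hr hq1 hr1 _ humem
    have hadd := gp2_add S hconn w x z
    have hcwz : (cay S).dist z w = (cay S).dist w z := SimpleGraph.dist_comm ..
    have hcwx : (cay S).dist x w = (cay S).dist w x := SimpleGraph.dist_comm ..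
    have tA := hconn.dist_triangle (u := z) (v := x) (w := w)
    have tB := hconn.dist_triangle (u := x) (v := w) (w := z)
    have hczx : (cay S).dist z x = (cay S).dist x z := SimpleGraph.dist_comm ..
    rcases hv with hv | hv
    · -- v on [z, w]
      obtain ⟨j, hgv, hjle⟩ := Walk.mem_support_iff_exists_getVert.mp hv
      have hzv : (cay S).dist z v = j := by
        rw [← hgv]
        simpa using dist_getVert_geodesic S hconn q1 hq1 (i := 0) (j := j) (by omega) hjle
      have hvw : (cay S).dist v w = q1.length - j := by
        rw [← hgv]
        have := dist_getVert_geodesic S hconn q1 hq1 (i := j) (j := q1.length) hjle le_rfl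
        rwa [Walk.getVert_length] at this
      have hjlow : r.length - t ≤ j + δ := by
        have tz := hconn.dist_triangle (u := u) (v := v) (w := z)
        have c2 : (cay S).dist v z = (cay S).dist z v := SimpleGraph.dist_comm ..
        omega
      have tw := hconn.dist_triangle (u := w) (v := v) (w := u)
      have c3 : (cay S).dist w v = (cay S).dist v w := SimpleGraph.dist_comm ..
      have c5 : (cay S).dist v u = (cay S).dist u v := SimpleGraph.dist_comm ..
      have hrL : r.length = (cay S).dist x z := hr
      have hq1L : q1.length = (cay S).dist z w := hq1
      have hgpe := gp2_add S hconn w x z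
      -- d w u ≤ δ + d v w ≤ δ + (dzw - j) ≤ δ + dzw - (r.length - t) + δ
      omega
    · -- v on [x, w]
      obtain ⟨j, hgv, hjle⟩ := Walk.mem_support_iff_exists_getVert.mp hv
      have hxv : (cay S).dist x v = j := by
        rw [← hgv]
        simpa using dist_getVert_geodesic S hconn r1 hr1 (i := 0) (j := j) (by omega) hjle
      have hvw : (cay S).dist v w = r1.length - j := by
        rw [← hgv]
        have := dist_getVert_geodesic S hconn r1 hr1 (i := j) (j := r1.length) hjle le_rfl
        rwa [Walk.getVert_length] at this
      have hjlow : t ≤ j + δ := by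
        have tz := hconn.dist_triangle (u := x) (v := v) (w := u)
        have c2 : (cay S).dist v u = (cay S).dist u v := SimpleGraph.dist_comm ..
        omega
      have tw := hconn.dist_triangle (u := w) (v := v) (w := u)
      have c3 : (cay S).dist w v = (cay S).dist v w := SimpleGraph.dist_comm ..
      have c5 : (cay S).dist v u = (cay S).dist u v := SimpleGraph.dist_comm ..
      have hr1L : r1.length = (cay S).dist x w := hr1
      have hgpe := gp2_add S hconn w x z
      omega
  -- Step C : slim triangle (x, z, y)
  obtain ⟨q2, hq2⟩ := (hconn z y).exists_walk_length_eq_dist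
  obtain ⟨r2, hr2⟩ := (hconn x y).exists_walk_length_eq_dist
  obtain ⟨v2, hv2, huv2⟩ := hslim x z y r q2 r2 hr hq2 hr2 _ humem
  rcases hv2 with hv2 | hv2
  · -- v2 on [z, y] : bound gp2 w z y
    obtain ⟨j, hgv, hjle⟩ := Walk.mem_support_iff_exists_getVert.mp hv2
    have hA2 : gp2 S w z y ≤ 2 * (cay S).dist w v2 := by
      rw [← hgv]
      exact gp2_le_two_dist S hconn q2 hq2 w hjle
    have tw := hconn.dist_triangle (u := w) (v := u) (w := v2)
    refine le_trans (min_le_right _ _) ?_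
    omega
  · -- v2 on [x, y] : bound gp2 w x y
    obtain ⟨j, hgv, hjle⟩ := Walk.mem_support_iff_exists_getVert.mp hv2
    have hA2 : gp2 S w x y ≤ 2 * (cay S).dist w v2 := by
      rw [← hgv]
      exact gp2_le_two_dist S hconn r2 hr2 w hjle
    have tw := hconn.dist_triangle (u := w) (v := u) (w := v2)
    refine le_trans (min_le_left _ _) ?_
    omega

/-- The chain lemma: a chain with aligned consecutive triples makes linear progress. -/
lemma chain_lemma (hconn : (cay S).Connected) (x : ℕ → G) (M σmin ρ2 δ4 : ℕ)
    (hcons : ∀ j, j + 1 ≤ M → σmin ≤ (cay S).dist (x j) (x (j + 1)))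
    (htrip : ∀ j, j + 2 ≤ M → gp2 S (x (j + 1)) (x j) (x (j + 2)) ≤ ρ2)
    (h4pt : ∀ a b c w : G, min (gp2 S w a b) (gp2 S w c b) ≤ gp2 S w a c + δ4)
    (hsig : ρ2 + δ4 + 1 ≤ σmin) :
    ∀ j, j + 1 ≤ M → gp2 S (x j) (x 0) (x (j + 1)) ≤ ρ2 + δ4 ∧
      j + 1 ≤ (cay S).dist (x 0) (x (j + 1)) := by
  intro j
  induction j with
  | zero =>
    intro h1
    simp only [show (0:ℕ) + 1 = 1 from rfl]
    have hh := hcons 0 h1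
    simp only [show (0:ℕ) + 1 = 1 from rfl] at hh
    constructor
    · have hd := gp2_add S hconn (x 0) (x 0) (x 1)
      have hs : (cay S).dist (x 0) (x 0) = 0 := SimpleGraph.dist_self ..
      omega
    · omega
  | succ j ih =>
    intro hj2
    simp only [show j + 1 + 1 = j + 2 from rfl]
    obtain ⟨hgp, hd⟩ := ih (by omega)
    have h4 := h4pt (x j) (x 0) (x (j + 2)) (x (j + 1))
    have htr := htrip j (by omega)
    -- first argument of the min is large
    have hfirst : 2 * (cay S).dist (x j) (x (j + 1)) ≤
        gp2 S (x (j + 1)) (x j) (x 0) + gp2 S (x j) (x 0) (x (j + 1)) := by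
      have e1 := gp2_add S hconn (x (j + 1)) (x j) (x 0)
      have e2 := gp2_add S hconn (x j) (x 0) (x (j + 1))
      have c1 : (cay S).dist (x (j+1)) (x j) = (cay S).dist (x j) (x (j+1)) :=
        SimpleGraph.dist_comm ..
      have c2 : (cay S).dist (x j) (x 0) = (cay S).dist (x 0) (x j) :=
        SimpleGraph.dist_comm ..
      have c3 : (cay S).dist (x (j+1)) (x 0) = (cay S).dist (x 0) (x (j+1)) :=
        SimpleGraph.dist_comm ..
      omega
    have hcj := hcons j (by omega)
    have hcj1 := hcons (j + 1) (by omega)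
    simp only [show j + 1 + 1 = j + 2 from rfl] at hcj1
    have hmin2 : gp2 S (x (j + 1)) (x 0) (x (j + 2)) ≤ ρ2 + δ4 := by
      rcases min_le_iff.mp (le_trans h4 (by omega :
          gp2 S (x (j+1)) (x j) (x (j+2)) + δ4 ≤ ρ2 + δ4)) with hcase | hcase
      · exfalso
        -- gp2 (x (j+1)) (x j) (x 0) ≥ 2σmin - (ρ2 + δ4) > ρ2 + δ4
        omega
      · -- note symmetry of gp2 in last two arguments
        have : gp2 S (x (j+1)) (x (j+2)) (x 0) = gp2 S (x (j+1)) (x 0) (x (j+2)) := by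
          rw [gp2, gp2]
          have c : (cay S).dist (x (j+2)) (x 0) = (cay S).dist (x 0) (x (j+2)) :=
            SimpleGraph.dist_comm ..
          omega
        omega
    constructor
    · exact hmin2
    · have e := gp2_add S hconn (x (j + 1)) (x 0) (x (j + 2))
      have c1 : (cay S).dist (x (j+1)) (x 0) = (cay S).dist (x 0) (x (j+1)) :=
        SimpleGraph.dist_comm ..
      omega

end Chunk5

section Chunk6

variable {G : Type*} [Group G] (S : Finset G) (δ : ℕ)

open SimpleGraph

lemma split_pair (L₀ : ℕ) (hL : 0 < L₀) (m m' : ℕ) (hle : m ≤ m') (hdiff : m' - m ≤ L₀) :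
    (m' / L₀ = m / L₀ ∧ m % L₀ ≤ m' % L₀ ∧ m' - m = m' % L₀ - m % L₀) ∨
    (m' / L₀ = m / L₀ + 1 ∧ m' % L₀ ≤ m % L₀ ∧
      m' - m = (L₀ - m % L₀) + m' % L₀) := by
  have e1 := Nat.div_add_mod m L₀
  have e2 := Nat.div_add_mod m' L₀
  have hr : m % L₀ < L₀ := Nat.mod_lt _ hL
  have hr' : m' % L₀ < L₀ := Nat.mod_lt _ hL
  have hii : m / L₀ ≤ m' / L₀ := Nat.div_le_div_right hle
  have hii2 : m' / L₀ ≤ m / L₀ + 1 := by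
    have h1 : m' ≤ m + L₀ := by omega
    have h2 : m' / L₀ ≤ (m + L₀) / L₀ := Nat.div_le_div_right h1
    rwa [Nat.add_div_right _ hL] at h2
  have hcase : m' / L₀ = m / L₀ ∨ m' / L₀ = m / L₀ + 1 := by omega
  rcases hcase with hb | hb
  · left
    rw [hb] at e2
    exact ⟨hb, by omega, by omega⟩
  · right
    rw [hb, Nat.mul_succ] at e2
    exact ⟨hb, by omega, by omega⟩

lemma window (hconn : (cay S).Connected) (hslim : SlimTriangles (cay S) δ)
    (g : G) (n₀ : ℕ) (p : (cay S).Walk 1 (g ^ n₀))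
    (hp : p.length = (cay S).dist 1 (g ^ n₀)) (hL : 1 ≤ p.length)
    (m m' : ℕ) (hmm : m ≤ m') (hdiff : m' - m ≤ p.length) :
    (cay S).dist ((g ^ n₀) ^ (m / p.length) * p.getVert (m % p.length))
        ((g ^ n₀) ^ (m' / p.length) * p.getVert (m' % p.length)) ≤ m' - m ∧
    m' - m ≤ (cay S).dist ((g ^ n₀) ^ (m / p.length) * p.getVert (m % p.length))
        ((g ^ n₀) ^ (m' / p.length) * p.getVert (m' % p.length)) + 2 * Cg S δ hconn g := by
  have hr : m % p.length < p.length := Nat.mod_lt _ hL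
  have hr' : m' % p.length < p.length := Nat.mod_lt _ hL
  rcases split_pair p.length hL m m' hmm hdiff with ⟨hb, hrr, hdd⟩ | ⟨hb, hrr, hdd⟩
  · -- same block
    rw [hb]
    rw [dist_smul S hconn ((g ^ n₀) ^ (m / p.length))]
    have hexact := dist_getVert_geodesic S hconn p hp (i := m % p.length)
      (j := m' % p.length) hrr (by omega)
    omega
  · -- adjacent blocks
    rw [hb, pow_succ, mul_assoc]
    rw [dist_smul S hconn ((g ^ n₀) ^ (m / p.length))]
    set r := m % p.length
    set r' := m' % p.length
    set Q := (cay S).dist (p.getVert r) (g ^ n₀ * p.getVert r') with hQ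
    have hgl : p.getVert p.length = g ^ n₀ := p.getVert_length
    constructor
    · -- upper bound
      have t1 := hconn.dist_triangle (u := p.getVert r) (v := p.getVert p.length)
        (w := g ^ n₀ * p.getVert r')
      have d1 : (cay S).dist (p.getVert r) (p.getVert p.length) ≤ p.length - r :=
        dist_getVert_le S hconn p r p.length (by omega)
      have d2 : (cay S).dist (p.getVert p.length) (g ^ n₀ * p.getVert r') ≤ r' := by
        rw [hgl]
        have : (cay S).dist (g ^ n₀ * 1) (g ^ n₀ * p.getVert r') ≤ r' := by
          rw [dist_smul S hconn]
          have := dist_getVert_le S hconn p 0 r' (by omega)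
          simpa using this
        simpa using this
      omega
    · -- lower bound
      have hpre := prefix_conj_bound S δ hconn hslim g n₀ p hp r (by omega)
      have hd0 : (cay S).dist (p.getVert r) (g ^ n₀ * p.getVert r)
          = nrm S ((p.getVert r)⁻¹ * g ^ n₀ * p.getVert r) := by
        rw [dist_eq_nrm S hconn, mul_assoc]
      have t2 := hconn.dist_triangle (u := p.getVert r) (v := g ^ n₀ * p.getVert r')
        (w := g ^ n₀ * p.getVert r)
      have d3 : (cay S).dist (g ^ n₀ * p.getVert r') (g ^ n₀ * p.getVert r) ≤ r - r' := by
        rw [dist_smul S hconn]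
        exact dist_getVert_le S hconn p r' r hrr
      have hnh : nrm S (g ^ n₀) = p.length := hp.symm
      omega

lemma pow_linear_growth (hconn : (cay S).Connected) (hslim : SlimTriangles (cay S) δ)
    (g : G) (hg : ¬ IsOfFinOrder g) :
    ∃ n₀ K : ℕ, 1 ≤ n₀ ∧ ∀ m : ℕ, 2 * m ≤ n₀ * nrm S (g ^ m) + K := by
  set C := Cg S δ hconn g with hC
  obtain ⟨n₀, hn₀, hbig⟩ := nrm_pow_unbounded S hconn g hg (8 * C + 16 * δ + 10)
  obtain ⟨p, hp⟩ := (hconn 1 (g ^ n₀)).exists_walk_length_eq_dist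
  have hplen : p.length = nrm S (g ^ n₀) := hp
  set L₀ := p.length with hL₀
  have hLbig : 8 * C + 16 * δ + 10 < L₀ := by rw [hplen]; exact hbig
  have hL : 1 ≤ L₀ := by omega
  set s₀ := L₀ / 2 with hs₀
  have hs₀L : 2 * s₀ ≤ L₀ ∧ L₀ ≤ 2 * s₀ + 1 := by omega
  have hs₀big : 4 * C + 8 * δ + 4 ≤ s₀ := by omega
  -- main per-T estimate
  have main : ∀ T : ℕ, 1 ≤ T → 2 * T ≤ nrm S ((g ^ n₀) ^ T) + s₀ := by
    intro T hT
    set x : ℕ → G := fun j => (g ^ n₀) ^ ((j * s₀) / L₀) * p.getVert ((j * s₀) % L₀) with hx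
    set M := (T * L₀) / s₀ with hM
    have hMbig : 2 * T ≤ M := by
      have h1 : (2 * s₀) * T ≤ T * L₀ := by
        have := hs₀L.1
        nlinarith
      have h2 : ((2 * s₀) * T) / s₀ ≤ M := Nat.div_le_div_right h1
      have h3 : ((2 * s₀) * T) / s₀ = 2 * T := by
        rw [show (2 * s₀) * T = (2 * T) * s₀ from by ring]
        exact Nat.mul_div_cancel _ (by omega)
      omega
    have hMs : M * s₀ ≤ T * L₀ := Nat.div_mul_le_self _ _
    have hWin : ∀ m m' : ℕ, m ≤ m' → m' - m ≤ L₀ →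
        (cay S).dist ((g ^ n₀) ^ (m / L₀) * p.getVert (m % L₀))
            ((g ^ n₀) ^ (m' / L₀) * p.getVert (m' % L₀)) ≤ m' - m ∧
        m' - m ≤ (cay S).dist ((g ^ n₀) ^ (m / L₀) * p.getVert (m % L₀))
            ((g ^ n₀) ^ (m' / L₀) * p.getVert (m' % L₀)) + 2 * C :=
      fun m m' h1 h2 => window S δ hconn hslim g n₀ p hp hL m m' h1 h2
    -- chain hypotheses
    have hcons : ∀ j, j + 1 ≤ M → (s₀ - 2 * C) ≤ (cay S).dist (x j) (x (j + 1)) := by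
      intro j hj
      have he : (j + 1) * s₀ = j * s₀ + s₀ := by ring
      have w1 : (cay S).dist (x j) (x (j + 1)) ≤ (j + 1) * s₀ - j * s₀ ∧
          (j + 1) * s₀ - j * s₀ ≤ (cay S).dist (x j) (x (j + 1)) + 2 * C :=
        hWin (j * s₀) ((j + 1) * s₀) (by omega) (by omega)
      omega
    have htrip : ∀ j, j + 2 ≤ M →
        gp2 S (x (j + 1)) (x j) (x (j + 2)) ≤ 2 * C := by
      intro j hj
      have he1 : (j + 1) * s₀ = j * s₀ + s₀ := by ring
      have he2 : (j + 2) * s₀ = j * s₀ + 2 * s₀ := by ring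
      have w1 : (cay S).dist (x j) (x (j + 1)) ≤ (j + 1) * s₀ - j * s₀ ∧
          (j + 1) * s₀ - j * s₀ ≤ (cay S).dist (x j) (x (j + 1)) + 2 * C :=
        hWin (j * s₀) ((j + 1) * s₀) (by omega) (by omega)
      have w2 : (cay S).dist (x (j + 1)) (x (j + 2)) ≤ (j + 2) * s₀ - (j + 1) * s₀ ∧
          (j + 2) * s₀ - (j + 1) * s₀ ≤ (cay S).dist (x (j + 1)) (x (j + 2)) + 2 * C :=
        hWin ((j + 1) * s₀) ((j + 2) * s₀) (by omega) (by omega)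
      have w3 : (cay S).dist (x j) (x (j + 2)) ≤ (j + 2) * s₀ - j * s₀ ∧
          (j + 2) * s₀ - j * s₀ ≤ (cay S).dist (x j) (x (j + 2)) + 2 * C :=
        hWin (j * s₀) ((j + 2) * s₀) (by omega) (by omega)
      have hadd := gp2_add S hconn (x (j + 1)) (x j) (x (j + 2))
      have c1 : (cay S).dist (x (j + 1)) (x j) = (cay S).dist (x j) (x (j + 1)) :=
        SimpleGraph.dist_comm ..
      omega
    have h4pt : ∀ a b c w : G, min (gp2 S w a b) (gp2 S w c b) ≤ gp2 S w a c + (8 * δ + 2) := by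
      intro a b c w
      have := four_point S δ hconn hslim w a b c
      omega
    have hchain := chain_lemma S hconn x M (s₀ - 2 * C) (2 * C) (8 * δ + 2)
      hcons htrip h4pt (by omega)
    have hM1 : (M - 1) + 1 ≤ M := by omega
    obtain ⟨-, hdist⟩ := hchain (M - 1) hM1
    have hMM : (M - 1) + 1 = M := by omega
    rw [hMM] at hdist
    -- x 0 = 1
    have hx0 : x 0 = 1 := by
      simp [hx]
    -- x M is close to the endpoint (g^n₀)^T
    have hend : (cay S).dist (x M) ((g ^ n₀) ^ T) ≤ s₀ := by
      have hTL : (T * L₀) / L₀ = T := Nat.mul_div_cancel _ (by omega)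
      have hTLm : (T * L₀) % L₀ = 0 := Nat.mul_mod_left _ _
      have hdd : T * L₀ - M * s₀ ≤ s₀ := by
        have h1 := Nat.div_add_mod (T * L₀) s₀
        have hmod : (T * L₀) % s₀ < s₀ := Nat.mod_lt _ (by omega)
        have h2 : M * s₀ = s₀ * ((T * L₀) / s₀) := by rw [hM]; ring
        omega
      have hW : (cay S).dist (x M)
          ((g ^ n₀) ^ ((T * L₀) / L₀) * p.getVert ((T * L₀) % L₀)) ≤ T * L₀ - M * s₀ :=
        (hWin (M * s₀) (T * L₀) (by omega) (by omega)).1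
      rw [hTL, hTLm] at hW
      simp only [Walk.getVert_zero, mul_one] at hW
      omega
    have htri := hconn.dist_triangle (u := x 0) (v := (g ^ n₀) ^ T) (w := x M)
    have hcm : (cay S).dist ((g ^ n₀) ^ T) (x M) = (cay S).dist (x M) ((g ^ n₀) ^ T) :=
      SimpleGraph.dist_comm ..
    rw [hx0] at htri hdist
    have hnrm : nrm S ((g ^ n₀) ^ T) = (cay S).dist 1 ((g ^ n₀) ^ T) := rfl
    omega
  -- convert to all m
  refine ⟨n₀, n₀ * (n₀ * nrm S g + s₀) + 2 * n₀, hn₀, ?_⟩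
  intro m
  by_cases hm0 : m / n₀ = 0
  · have hmlt : m < n₀ := by
      have hdm := Nat.div_add_mod m n₀
      rw [hm0, Nat.mul_zero, Nat.zero_add] at hdm
      have : m % n₀ < n₀ := Nat.mod_lt _ (by omega)
      omega
    omega
  · set T := m / n₀ with hT
    have hT1 : 1 ≤ T := Nat.one_le_iff_ne_zero.mpr hm0
    have e := Nat.div_add_mod m n₀
    have hmod : m % n₀ < n₀ := Nat.mod_lt _ (by omega)
    have hTm := main T hT1
    -- (g^n₀)^T = g^(n₀*T), and g^(n₀*T) = g^m * (g^(m % n₀))⁻¹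
    have hsplit : (g ^ n₀) ^ T = g ^ m * (g ^ (m % n₀))⁻¹ := by
      rw [← pow_mul]
      rw [show g ^ m = g ^ (n₀ * T + m % n₀) from by rw [e]]
      rw [pow_add]
      group
    have hnb : nrm S ((g ^ n₀) ^ T) ≤ nrm S (g ^ m) + n₀ * nrm S g := by
      rw [hsplit]
      calc nrm S (g ^ m * (g ^ (m % n₀))⁻¹)
          ≤ nrm S (g ^ m) + nrm S ((g ^ (m % n₀))⁻¹) := nrm_mul_le S hconn _ _
        _ = nrm S (g ^ m) + nrm S (g ^ (m % n₀)) := by rw [nrm_inv S hconn]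
        _ ≤ nrm S (g ^ m) + (m % n₀) * nrm S g := by
            have := nrm_pow_le S hconn g (m % n₀); omega
        _ ≤ nrm S (g ^ m) + n₀ * nrm S g := by
            have : (m % n₀) * nrm S g ≤ n₀ * nrm S g := Nat.mul_le_mul_right _ (by omega)
            omega
    -- combine: 2m = 2(n₀ T + m % n₀) ≤ 2 n₀ T + 2 n₀ ≤ n₀ (nrm + n₀ nrm g + s₀) + 2 n₀
    have h2T : 2 * T ≤ nrm S (g ^ m) + n₀ * nrm S g + s₀ := by omega
    calc 2 * m = 2 * (n₀ * T + m % n₀) := by rw [e]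
      _ ≤ 2 * (n₀ * T) + 2 * n₀ := by omega
      _ = n₀ * (2 * T) + 2 * n₀ := by ring
      _ ≤ n₀ * (nrm S (g ^ m) + n₀ * nrm S g + s₀) + 2 * n₀ :=
          Nat.add_le_add_right (Nat.mul_le_mul_left _ h2T) _
      _ = n₀ * nrm S (g ^ m) + (n₀ * (n₀ * nrm S g + s₀) + 2 * n₀) := by ring

end Chunk6

section Chunk7

variable {G : Type*} [Group G] (S : Finset G) (δ : ℕ)

open SimpleGraph

lemma iterate_rel (g y : G) (K L : ℕ) (hrel : y * g ^ K * y⁻¹ = g ^ L) :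
    ∀ n : ℕ, y ^ n * g ^ (K ^ n) * (y ^ n)⁻¹ = g ^ (L ^ n) := by
  have hstep : ∀ t : ℕ, y * g ^ (K * t) * y⁻¹ = g ^ (L * t) := by
    intro t
    rw [pow_mul, pow_mul, ← conj_pow, hrel]
  intro n
  induction n with
  | zero => simp
  | succ n ih =>
    have e1 : y ^ (n + 1) * g ^ (K ^ (n + 1)) * (y ^ (n + 1))⁻¹
        = y ^ n * (y * g ^ (K * K ^ n) * y⁻¹) * (y ^ n)⁻¹ := by
      have hKe : K ^ (n + 1) = K * K ^ n := by
        rw [pow_succ]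
        ring
      rw [hKe, pow_succ y]
      group
    rw [e1, hstep (K ^ n)]
    have e2 : y ^ n * g ^ (L * K ^ n) * (y ^ n)⁻¹
        = (y ^ n * g ^ (K ^ n) * (y ^ n)⁻¹) ^ L := by
      rw [conj_pow, ← pow_mul, mul_comm (K ^ n) L]
    rw [e2, ih, ← pow_mul]
    have hfin : L ^ n * L = L ^ (n + 1) := (pow_succ L n).symm
    rw [hfin]

lemma binom_lin (K : ℕ) : ∀ m : ℕ, K ^ m + m * K ^ (m - 1) ≤ (K + 1) ^ m := by
  intro m
  induction m with
  | zero => simp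
  | succ m ih =>
    have hKm : m * (K ^ (m - 1) * K) = m * K ^ m := by
      rcases Nat.eq_zero_or_pos m with hm | hm
      · simp [hm]
      · congr 1
        rw [← pow_succ]
        congr 1
        omega
    have step1 : (K ^ m + m * K ^ (m - 1)) * (K + 1) ≤ (K + 1) ^ m * (K + 1) :=
      Nat.mul_le_mul_right _ ih
    have expand : (K ^ m + m * K ^ (m - 1)) * (K + 1)
        = K ^ m * K + K ^ m + m * (K ^ (m - 1) * K) + m * K ^ (m - 1) := by ring
    have hsucc : (K + 1) ^ m * (K + 1) = (K + 1) ^ (m + 1) := (pow_succ _ _).symm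
    have hKm1 : K ^ m * K = K ^ (m + 1) := (pow_succ _ _).symm
    have htarg : (m + 1) * K ^ ((m + 1) - 1) = m * K ^ m + K ^ m := by
      simp only [Nat.add_sub_cancel]
      ring
    omega

lemma no_distortion (hconn : (cay S).Connected) (hslim : SlimTriangles (cay S) δ)
    (g y : G) (hg : ¬ IsOfFinOrder g) (K L : ℕ) (hK : 1 ≤ K) (hKL : K < L)
    (hrel : y * g ^ K * y⁻¹ = g ^ L) : False := by
  obtain ⟨n₀, K₂, hn₀, hgrow⟩ := pow_linear_growth S δ hconn hslim g hg
  set m := n₀ * nrm S g * K * K + 4 * n₀ * nrm S y + K₂ + 1 with hm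
  have hm1 : 1 ≤ m := by omega
  set n := 2 * m with hn
  -- upper bound
  have hup : nrm S (g ^ (L ^ n)) ≤ K ^ n * nrm S g + 2 * (n * nrm S y) := by
    have hit := iterate_rel g y K L hrel n
    rw [← hit]
    calc nrm S (y ^ n * g ^ (K ^ n) * (y ^ n)⁻¹)
        ≤ nrm S (g ^ (K ^ n)) + 2 * nrm S (y ^ n) := nrm_conj_le S hconn _ _
      _ ≤ K ^ n * nrm S g + 2 * (n * nrm S y) := by
          have u1 := nrm_pow_le S hconn g (K ^ n)
          have u2 := nrm_pow_le S hconn y n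
          have u3 : 2 * nrm S (y ^ n) ≤ 2 * (n * nrm S y) := by omega
          omega
  have hlow := hgrow (L ^ n)
  have hcomb : 2 * L ^ n ≤ n₀ * (K ^ n * nrm S g + 2 * (n * nrm S y)) + K₂ := by
    have := Nat.mul_le_mul_left n₀ hup
    omega
  -- binomial lower bound
  have hLK : (K + 1) ^ n ≤ L ^ n := Nat.pow_le_pow_left (by omega) n
  have hb := binom_lin K m
  have hsq : (K ^ m + m * K ^ (m - 1)) * (K ^ m + m * K ^ (m - 1))
      ≤ (K + 1) ^ m * (K + 1) ^ m := Nat.mul_le_mul hb hb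
  have hKn : K ^ n = K ^ m * K ^ m := by rw [← pow_add, hn, two_mul]
  have hKn2 : K ^ (m - 1) * K ^ (m - 1) = K ^ (2 * m - 2) := by
    rw [← pow_add]
    congr 1
    omega
  have hLn2 : (K + 1) ^ m * (K + 1) ^ m = (K + 1) ^ n := by rw [← pow_add, hn, two_mul]
  have hexp : (K ^ m + m * K ^ (m - 1)) * (K ^ m + m * K ^ (m - 1))
      = K ^ m * K ^ m + (m * (K ^ (m - 1) * K ^ (m - 1)) * m
        + 2 * (K ^ m * (m * K ^ (m - 1)))) := by ring
  have hbridge : m * (K ^ (m - 1) * K ^ (m - 1)) * m = m * K ^ (2 * m - 2) * m := by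
    rw [hKn2]
  have hmain : K ^ n + m * K ^ (2 * m - 2) * m ≤ (K + 1) ^ n := by omega
  -- quadratic term dominates
  have hKn_eq : K ^ n = K * K * K ^ (2 * m - 2) := by
    have h : n = (2 * m - 2) + 2 := by omega
    rw [h, pow_add]
    ring
  have hP1 : 1 ≤ K ^ (2 * m - 2) := Nat.one_le_pow _ _ (by omega)
  have hquad : n₀ * nrm S g * K ^ n + 4 * n₀ * nrm S y * m + (K₂ + 1) ≤ m * K ^ (2 * m - 2) * m := by
    have e : m * K ^ (2 * m - 2) * m
        = n₀ * nrm S g * K * K * K ^ (2 * m - 2) * m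
          + 4 * n₀ * nrm S y * (K ^ (2 * m - 2) * m)
          + (K₂ + 1) * (K ^ (2 * m - 2) * m) := by
      rw [hm]
      ring
    have p1 : n₀ * nrm S g * K ^ n ≤ n₀ * nrm S g * K * K * K ^ (2 * m - 2) * m := by
      have e2 : n₀ * nrm S g * K ^ n = n₀ * nrm S g * K * K * K ^ (2 * m - 2) := by
        rw [hKn_eq]
        ring
      rw [e2]
      exact Nat.le_mul_of_pos_right _ (by omega)
    have hAm : m ≤ K ^ (2 * m - 2) * m := Nat.le_mul_of_pos_left _ (by omega)
    have p2 : 4 * n₀ * nrm S y * m ≤ 4 * n₀ * nrm S y * (K ^ (2 * m - 2) * m) :=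
      Nat.mul_le_mul_left _ hAm
    have p3 : K₂ + 1 ≤ (K₂ + 1) * (K ^ (2 * m - 2) * m) :=
      Nat.le_mul_of_pos_right _ (by omega)
    omega
  -- final contradiction
  have hdistrib : n₀ * (K ^ n * nrm S g + 2 * (n * nrm S y)) = n₀ * nrm S g * K ^ n + 4 * n₀ * nrm S y * m := by
    rw [hn]
    ring
  omega

end Chunk7

lemma finOrder_of_zpow_eq_one {G : Type*} [Group G] {g : G} {l : ℤ} (hl : l ≠ 0)
    (he : g ^ l = 1) : IsOfFinOrder g := by
  refine isOfFinOrder_iff_pow_eq_one.mpr ⟨l.natAbs, Int.natAbs_pos.mpr hl, ?_⟩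
  rcases Int.natAbs_eq l with h2 | h2
  · rw [h2] at he
    rwa [zpow_natCast] at he
  · rw [h2, zpow_neg, inv_eq_one, zpow_natCast] at he
    exact he

end HypAux

theorem stmt6 {G : Type*} [Group G] (hG : IsHyperbolicGroup G)
    (g x : G) (hg : ¬ IsOfFinOrder g) (k l : ℤ) (hl : l ≠ 0)
    (h : x * g ^ k * x⁻¹ = g ^ l) : k = l ∨ k = -l := by
  obtain ⟨S, δ, hclos, hslim⟩ := hG
  have hconn := HypAux.connected_of_closure S hclos
  by_contra hcon
  push_neg at hcon
  obtain ⟨hne1, hne2⟩ := hcon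
  have hk0 : k ≠ 0 := by
    rintro rfl
    apply hg
    rw [zpow_zero, mul_one, mul_inv_cancel] at h
    exact HypAux.finOrder_of_zpow_eq_one hl h.symm
  have hstep : ∀ t : ℤ, x * g ^ (k * t) * x⁻¹ = g ^ (l * t) := by
    intro t
    rw [zpow_mul, zpow_mul, ← conj_zpow, h]
  have h2 : x ^ 2 * g ^ (k * k) * (x ^ 2)⁻¹ = g ^ (l * l) := by
    have e1 : x ^ 2 * g ^ (k * k) * (x ^ 2)⁻¹ = x * (x * g ^ (k * k) * x⁻¹) * x⁻¹ := by
      rw [pow_two]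
      group
    rw [e1, hstep k, mul_comm l k, hstep l]
  have hkk : ((k * k).toNat : ℤ) = k * k := Int.toNat_of_nonneg (mul_self_nonneg k)
  have hll : ((l * l).toNat : ℤ) = l * l := Int.toNat_of_nonneg (mul_self_nonneg l)
  have hk2 : (0 : ℤ) < k * k := mul_self_pos.mpr hk0
  have hl2 : (0 : ℤ) < l * l := mul_self_pos.mpr hl
  have hKpos : 1 ≤ (k * k).toNat := by omega
  have hLpos : 1 ≤ (l * l).toNat := by omega
  have hKL : (k * k).toNat ≠ (l * l).toNat := by
    intro hEq
    have heq2 : k * k = l * l := by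
      rw [← hkk, ← hll, hEq]
    have hfac : (k - l) * (k + l) = 0 := by
      have : (k - l) * (k + l) = k * k - l * l := by ring
      omega
    rcases mul_eq_zero.mp hfac with hc | hc
    · exact hne1 (by omega)
    · exact hne2 (by omega)
  have hrelN : x ^ 2 * g ^ ((k * k).toNat) * (x ^ 2)⁻¹ = g ^ ((l * l).toNat) := by
    have d1 : g ^ ((k * k).toNat) = g ^ (k * k) := by rw [← zpow_natCast, hkk]
    have d2 : g ^ ((l * l).toNat) = g ^ (l * l) := by rw [← zpow_natCast, hll]
    rw [d1, d2]
    exact h2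
  rcases lt_or_gt_of_ne hKL with hlt | hgt
  · exact HypAux.no_distortion S δ hconn hslim g (x ^ 2) hg _ _ hKpos hlt hrelN
  · have hrelInv : (x ^ 2)⁻¹ * g ^ ((l * l).toNat) * ((x ^ 2)⁻¹)⁻¹ = g ^ ((k * k).toNat) := by
      rw [← hrelN]
      group
    exact HypAux.no_distortion S δ hconn hslim g ((x ^ 2)⁻¹) hg _ _ hLpos hgt hrelInv
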